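/- Let τ ≥ 1, ρ ≥ 1, λ ∈ ℂ, and consider the 4τρ × 4τρ matrices over S = ℂ[[x,y,z]]: φ_deg = [[−zx·I, 0, 0, 0],[z·I, −y·I, 0, 0],[0, x·I, −z·I, 0],[−x·R, 0, y·I, −xy·I]] and ψ_deg = [[−y·I, 0, 0, 0],[−z·I, −zx·I, 0, 0],[−x·I, −x²·I, −xy·I, 0],[−I + R, −x·I, −y·I, −z·I]], where I = I_{τρ} and R = R_{τ,ρ}(λ) := R_τ(J_ρ(λ)) is the matrix J_τ ⊗ I_ρ + K_τ^{τ−1} ⊗ J_ρ(λ). Then (φ_deg, ψ_deg) is a matrix factorization of xyz: φ_deg ψ_deg = ψ_deg φ_deg = xyz · I_{4τρ}. -/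

import Mathlib

noncomputable section

open Matrix Kronecker

/-- `S = ℂ[[x,y,z]]`. -/
abbrev S3 : Type := MvPowerSeries (Fin 3) ℂ

def xx : S3 := MvPowerSeries.X 0
def yy : S3 := MvPowerSeries.X 1
def zz : S3 := MvPowerSeries.X 2

/-- The `τ × τ` nilpotent Jordan block `J_τ` (1's on the superdiagonal). -/
def nilJ (τ : ℕ) : Matrix (Fin τ) (Fin τ) ℂ :=
  Matrix.of fun i j => if (i : ℕ) + 1 = (j : ℕ) then 1 else 0

/-- The `ρ × ρ` Jordan block with eigenvalue `λ`. -/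
def jordanBlock (ρ : ℕ) (lam : ℂ) : Matrix (Fin ρ) (Fin ρ) ℂ :=
  Matrix.of fun i j => if i = j then lam else if (i : ℕ) + 1 = (j : ℕ) then 1 else 0

/-- `R_{τ,ρ}(λ) = J_τ ⊗ I_ρ + K_τ^{τ-1} ⊗ J_ρ(λ)`, as a matrix over `S`. -/
def RtrS (τ ρ : ℕ) (lam : ℂ) : Matrix (Fin τ × Fin ρ) (Fin τ × Fin ρ) S3 :=
  (nilJ τ ⊗ₖ (1 : Matrix (Fin ρ) (Fin ρ) ℂ) +
    ((nilJ τ)ᵀ ^ (τ - 1)) ⊗ₖ jordanBlock ρ lam).map (algebraMap ℂ S3)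

/-- The 4×4 block structure of `φ_deg`. -/
def phiBlk (τ ρ : ℕ) (lam : ℂ) :
    Fin 4 → Fin 4 → Matrix (Fin τ × Fin ρ) (Fin τ × Fin ρ) S3 :=
  ![![(-(zz * xx)) • 1, 0, 0, 0],
    ![zz • 1, (-yy) • 1, 0, 0],
    ![0, xx • 1, (-zz) • 1, 0],
    ![(-xx) • RtrS τ ρ lam, 0, yy • 1, (-(xx * yy)) • 1]]

/-- The 4×4 block structure of `ψ_deg`. -/
def psiBlk (τ ρ : ℕ) (lam : ℂ) :
    Fin 4 → Fin 4 → Matrix (Fin τ × Fin ρ) (Fin τ × Fin ρ) S3 :=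
  ![![(-yy) • 1, 0, 0, 0],
    ![(-zz) • 1, (-(zz * xx)) • 1, 0, 0],
    ![(-xx) • 1, (-(xx * xx)) • 1, (-(xx * yy)) • 1, 0],
    ![RtrS τ ρ lam - 1, (-xx) • 1, (-yy) • 1, (-zz) • 1]]

/-- The `4τρ × 4τρ` matrix `φ_deg`. -/
def phiDeg (τ ρ : ℕ) (lam : ℂ) :
    Matrix (Fin 4 × (Fin τ × Fin ρ)) (Fin 4 × (Fin τ × Fin ρ)) S3 :=
  Matrix.of fun p q => phiBlk τ ρ lam p.1 q.1 p.2 q.2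

/-- The `4τρ × 4τρ` matrix `ψ_deg`. -/
def psiDeg (τ ρ : ℕ) (lam : ℂ) :
    Matrix (Fin 4 × (Fin τ × Fin ρ)) (Fin 4 × (Fin τ × Fin ρ)) S3 :=
  Matrix.of fun p q => psiBlk τ ρ lam p.1 q.1 p.2 q.2


lemma blockMul {n : Type*} [Fintype n] [DecidableEq n]
    (A B : Fin 4 → Fin 4 → Matrix n n S3) :
    (Matrix.of fun p q : Fin 4 × n => A p.1 q.1 p.2 q.2) *
        (Matrix.of fun p q : Fin 4 × n => B p.1 q.1 p.2 q.2)
      = Matrix.of fun p q : Fin 4 × n => (∑ k, A p.1 k * B k q.1) p.2 q.2 := by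
  ext ⟨i, a⟩ ⟨j, b⟩
  simp [Matrix.mul_apply, Fintype.sum_prod_type, Matrix.sum_apply]

lemma blockEq {n : Type*} [Fintype n] [DecidableEq n]
    (A : Fin 4 → Fin 4 → Matrix n n S3) (s : S3)
    (h : ∀ i j, A i j = if i = j then s • 1 else 0) :
    (Matrix.of fun p q : Fin 4 × n => A p.1 q.1 p.2 q.2)
      = s • (1 : Matrix (Fin 4 × n) (Fin 4 × n) S3) := by
  ext ⟨i, a⟩ ⟨j, b⟩
  rw [Matrix.of_apply, h]
  by_cases hij : i = j <;>
    simp [hij, Matrix.one_apply, Prod.ext_iff]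

set_option maxHeartbeats 2000000 in
/-- `(φ_deg, ψ_deg)` is a matrix factorization of `xyz`. -/
theorem phiDeg_psiDeg_matrix_factorization (τ ρ : ℕ) (hτ : 1 ≤ τ) (hρ : 1 ≤ ρ) (lam : ℂ) :
    phiDeg τ ρ lam * psiDeg τ ρ lam = (xx * yy * zz) • 1 ∧
    psiDeg τ ρ lam * phiDeg τ ρ lam = (xx * yy * zz) • 1 := by
  refine ⟨?_, ?_⟩
  · rw [phiDeg, psiDeg, blockMul]
    refine blockEq (fun i j => ∑ k, phiBlk τ ρ lam i k * psiBlk τ ρ lam k j) _ fun i j => ?_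
    fin_cases i <;> fin_cases j <;>
      simp [phiBlk, psiBlk, Fin.sum_univ_four, smul_mul_assoc, mul_smul_comm,
        smul_smul, mul_sub, smul_sub, mul_one, one_mul] <;>
      (ring_nf <;> abel)
  · rw [phiDeg, psiDeg, blockMul]
    refine blockEq (fun i j => ∑ k, psiBlk τ ρ lam i k * phiBlk τ ρ lam k j) _ fun i j => ?_
    fin_cases i <;> fin_cases j <;>
      simp [phiBlk, psiBlk, Fin.sum_univ_four, smul_mul_assoc, mul_smul_comm,
        smul_smul, mul_sub, smul_sub, mul_one, one_mul] <;>
      (ring_nf <;> abel)
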